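/- Let X be a multispindle with an element t forming a one-element submultispindle, with multi-term differential of scalar sum Σ = a₁+…+aₖ. If Σ = 0 then Hₙ({t}) ≅ ℤ for all n ≥ 0; if Σ ≠ 0 then H₀({t}) ≅ ℤ, Hₙ({t}) = 0 for n > 0 even, and Hₙ({t}) ≅ ℤ/Σ for n odd. -/

import Mathlib

/-- The `i`-th face map on tuples, for a binary operation `⋆`. -/
def dFun {X : Type*} (op : X → X → X) (n : ℕ) (i : Fin (n+1)) (x : Fin (n+1) → X) :
    Fin n → X :=
  fun j => if (j : ℕ) < (i : ℕ) then op (x j.castSucc) (x i) else x j.succ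

/-- The chain group `Cₙ = ℤ X^{n+1}`. -/
abbrev CC (X : Type*) (n : ℕ) := (Fin (n+1) → X) →₀ ℤ

/-- The multi-term boundary `∂ = Σᵢ (−1)ⁱ Σᵣ aᵣ dᵢ^{⋆ᵣ} : Cₙ₊₁ → Cₙ`. -/
noncomputable def bdL {X : Type*} {k : ℕ} (ops : Fin k → X → X → X) (a : Fin k → ℤ) (n : ℕ) :
    CC X (n+1) →ₗ[ℤ] CC X n :=
  ∑ i : Fin (n+2), ∑ r : Fin k,
    (((-1 : ℤ) ^ (i : ℕ)) * a r) • Finsupp.lmapDomain ℤ ℤ (dFun (ops r) (n+1) i)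

/-- The cycles: everything in degree `0`, `ker ∂ₙ` in degree `n ≥ 1`. -/
noncomputable def ZC {X : Type*} {k : ℕ} (ops : Fin k → X → X → X) (a : Fin k → ℤ) :
    (n : ℕ) → Submodule ℤ (CC X n)
  | 0 => ⊤
  | n+1 => LinearMap.ker (bdL ops a n)

/-- The `n`-th homology of the multi-term distributive chain complex. -/
noncomputable abbrev HC {X : Type*} {k : ℕ} (ops : Fin k → X → X → X) (a : Fin k → ℤ)
    (n : ℕ) :=
  ZC ops a n ⧸
    Submodule.comap (ZC ops a n).subtype (LinearMap.range (bdL ops a n))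

section Aux

variable {X : Type*} [Unique X] {k : ℕ}

/-- Evaluation equivalence `CC X n ≃ ℤ` for a one-point `X`. -/
noncomputable def eCC (X : Type*) [Unique X] (n : ℕ) : CC X n ≃ₗ[ℤ] ℤ :=
  Finsupp.LinearEquiv.finsuppUnique ℤ ℤ (Fin (n+1) → X)

lemma eCC_mapDomain {m n : ℕ} (f : (Fin (m+1) → X) → (Fin (n+1) → X))
    (x : CC X m) : eCC X n (Finsupp.mapDomain f x) = eCC X m x := by
  have hf : Function.Injective f := fun a b _ => Subsingleton.elim a b
  have h1 : f default = default := Subsingleton.elim _ _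
  show (Finsupp.mapDomain f x) default = x default
  rw [← h1, Finsupp.mapDomain_apply hf]

lemma eCC_bdL (ops : Fin k → X → X → X) (a : Fin k → ℤ) (n : ℕ) (x : CC X (n+1)) :
    eCC X n (bdL ops a n x) =
      (if Even n then 0 else (∑ r : Fin k, a r)) * eCC X (n+1) x := by
  have : eCC X n (bdL ops a n x)
      = ∑ i : Fin (n+2), ∑ r : Fin k,
          (((-1 : ℤ) ^ (i : ℕ)) * a r) * eCC X (n+1) x := by
    rw [bdL]
    rw [LinearMap.sum_apply, map_sum]
    refine Finset.sum_congr rfl fun i _ => ?_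
    rw [LinearMap.sum_apply, map_sum]
    refine Finset.sum_congr rfl fun r _ => ?_
    rw [LinearMap.smul_apply, map_smul, smul_eq_mul]
    congr 1
    exact eCC_mapDomain _ x
  rw [this]
  have h2 : ∑ i : Fin (n+2), ∑ r : Fin k,
      (((-1 : ℤ) ^ (i : ℕ)) * a r) * eCC X (n+1) x
      = (∑ i : Fin (n+2), (-1 : ℤ) ^ (i : ℕ)) * (∑ r : Fin k, a r) * eCC X (n+1) x := by
    rw [Finset.sum_mul, Finset.sum_mul]
    refine Finset.sum_congr rfl fun i _ => ?_
    rw [mul_assoc, Finset.sum_mul, Finset.mul_sum]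
    refine Finset.sum_congr rfl fun r _ => ?_
    ring
  rw [h2]
  have h3 : (∑ i : Fin (n+2), (-1 : ℤ) ^ (i : ℕ)) = if Even n then 0 else 1 := by
    rw [Fin.sum_univ_eq_sum_range (fun i => (-1 : ℤ) ^ i) (n+2), neg_one_geom_sum]
    simp [Nat.even_add_one, Nat.even_add_one, parity_simps]
  rw [h3]
  by_cases hn : Even n <;> simp [hn]

lemma bdL_zero_of_even (ops : Fin k → X → X → X) (a : Fin k → ℤ) {n : ℕ}
    (hn : Even n) : bdL ops a n = 0 := by
  refine LinearMap.ext fun x => (eCC X n).injective ?_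
  have := eCC_bdL ops a n x
  rw [if_pos hn, zero_mul] at this
  simpa using this

lemma bdL_zero_of_sum_zero (ops : Fin k → X → X → X) (a : Fin k → ℤ)
    (hS : (∑ r : Fin k, a r) = 0) (n : ℕ) : bdL ops a n = 0 := by
  refine LinearMap.ext fun x => (eCC X n).injective ?_
  rw [eCC_bdL ops a n x, hS]
  simp

end Aux

/-- homology of a one-point multispindle `{t}` with scalar sum
`Σ = a₁ + … + aₖ`: if `Σ = 0` then `Hₙ ≅ ℤ` for all `n`; otherwise `H₀ ≅ ℤ`,
`Hₙ = 0` for even `n > 0`, and `Hₙ ≅ ℤ/Σ` for odd `n`. -/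
theorem homology_of_point {X : Type*} {k : ℕ} (ops : Fin k → X → X → X) (a : Fin k → ℤ)
    (t : X) (hone : ∀ x : X, x = t)
    (hidem : ∀ (r : Fin k) (x : X), ops r x x = x)
    (hdist : ∀ (r s : Fin k) (x y z : X),
      ops r (ops s x y) z = ops s (ops r x z) (ops r y z)) :
    ((∑ r : Fin k, a r) = 0 → ∀ n : ℕ, Nonempty (HC ops a n ≃ₗ[ℤ] ℤ)) ∧
    ((∑ r : Fin k, a r) ≠ 0 →
      Nonempty (HC ops a 0 ≃ₗ[ℤ] ℤ) ∧
      (∀ n : ℕ, 0 < n → Even n → Subsingleton (HC ops a n)) ∧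
      (∀ n : ℕ, Odd n →
        Nonempty (HC ops a n ≃ₗ[ℤ] ZMod (∑ r : Fin k, a r).natAbs))) := by
  haveI : Unique X := ⟨⟨t⟩, fun x => hone x⟩
  set S : ℤ := ∑ r : Fin k, a r with hSdef
  -- generic ℤ-case builder
  have buildZ : ∀ n : ℕ, ZC ops a n = ⊤ → LinearMap.range (bdL ops a n) = ⊥ →
      Nonempty (HC ops a n ≃ₗ[ℤ] ℤ) := by
    intro n hZ hR
    have hN : Submodule.comap (ZC ops a n).subtype (LinearMap.range (bdL ops a n)) = ⊥ := by
      rw [hR]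
      simpa using Submodule.ker_subtype (ZC ops a n)
    exact ⟨(Submodule.quotEquivOfEqBot _ hN).trans
      (((LinearEquiv.ofEq _ _ hZ).trans (Submodule.topEquiv)).trans (eCC X n))⟩
  have hZ0 : ZC ops a 0 = ⊤ := rfl
  have hR_even : ∀ n : ℕ, Even n → LinearMap.range (bdL ops a n) = ⊥ := by
    intro n hn
    rw [bdL_zero_of_even ops a hn, LinearMap.range_zero]
  constructor
  · -- Σ = 0
    intro hS n
    have hbd : ∀ m, bdL ops a m = 0 := bdL_zero_of_sum_zero ops a hS
    have hZ : ZC ops a n = ⊤ := by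
      cases n with
      | zero => rfl
      | succ m => show LinearMap.ker (bdL ops a m) = ⊤; rw [hbd m, LinearMap.ker_zero]
    have hR : LinearMap.range (bdL ops a n) = ⊥ := by
      rw [hbd n, LinearMap.range_zero]
    exact buildZ n hZ hR
  · -- Σ ≠ 0
    intro hS
    refine ⟨buildZ 0 hZ0 (hR_even 0 (Even.zero)), ?_, ?_⟩
    · -- even n > 0 : H = 0
      intro n hpos hev
      obtain ⟨m, rfl⟩ : ∃ m, n = m + 1 := ⟨n - 1, by omega⟩
      have hm : ¬ Even m := by
        rw [Nat.even_add_one] at hev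
        simpa using hev
      have hinj : Function.Injective (bdL ops a m) := by
        intro x y hxy
        have h1 := eCC_bdL ops a m x
        have h2 := eCC_bdL ops a m y
        rw [if_neg hm] at h1 h2
        have : S * eCC X (m+1) x = S * eCC X (m+1) y := by
          rw [← h1, ← h2, hxy]
        exact (eCC X (m+1)).injective (mul_left_cancel₀ hS this)
      have hZ : ZC ops a (m+1) = ⊥ := by
        show LinearMap.ker (bdL ops a m) = ⊥
        exact LinearMap.ker_eq_bot.mpr hinj
      haveI : Subsingleton (ZC ops a (m+1)) := by
        rw [hZ]; infer_instance
      exact (Submodule.mkQ_surjective _).subsingleton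
    · -- odd n : H = ℤ/Σ
      intro n hodd
      obtain ⟨m, rfl⟩ : ∃ m, n = m + 1 := ⟨n - 1, by have := hodd.pos; omega⟩
      have hm : Even m := by
        rcases hodd with ⟨j, hj⟩
        exact ⟨j, by omega⟩
      have hmodd : ¬ Even (m+1) := by simpa [Nat.even_add_one] using hm
      have hZ : ZC ops a (m+1) = ⊤ := by
        show LinearMap.ker (bdL ops a m) = ⊤
        rw [bdL_zero_of_even ops a hm, LinearMap.ker_zero]
      set d : ℕ := S.natAbs with hd
      -- range characterization
      have hrange : ∀ y : CC X (m+1),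
          y ∈ LinearMap.range (bdL ops a (m+1)) ↔ S ∣ eCC X (m+1) y := by
        intro y
        constructor
        · rintro ⟨x, rfl⟩
          rw [eCC_bdL ops a (m+1) x, if_neg hmodd]
          exact ⟨_, rfl⟩
        · rintro ⟨c, hc⟩
          refine ⟨(eCC X (m+2)).symm c, ?_⟩
          apply (eCC X (m+1)).injective
          rw [eCC_bdL ops a (m+1), if_neg hmodd, hc]
          simp [hSdef]
      -- the map to ZMod d
      let ψ : (ZC ops a (m+1)) →ₗ[ℤ] ZMod d :=
        ((Int.castAddHom (ZMod d)).toIntLinearMap).comp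
          ((eCC X (m+1)).toLinearMap.comp (ZC ops a (m+1)).subtype)
      have hψsurj : Function.Surjective ψ := by
        intro z
        obtain ⟨c, hc⟩ := ZMod.intCast_surjective (n := d) z
        refine ⟨⟨(eCC X (m+1)).symm c, by rw [hZ]; trivial⟩, ?_⟩
        show ((eCC X (m+1)) ((eCC X (m+1)).symm c) : ℤ) = z
        rw [LinearEquiv.apply_symm_apply]
        exact hc
      have hker : Submodule.comap (ZC ops a (m+1)).subtype
          (LinearMap.range (bdL ops a (m+1))) = LinearMap.ker ψ := by
        ext x
        simp only [Submodule.mem_comap, LinearMap.mem_ker]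
        rw [hrange]
        show S ∣ eCC X (m+1) x.1 ↔ ((eCC X (m+1) x.1 : ℤ) : ZMod d) = 0
        rw [ZMod.intCast_zmod_eq_zero_iff_dvd, hd, Int.natAbs_dvd]
      exact ⟨(Submodule.quotEquivOfEq _ _ hker).trans
        (ψ.quotKerEquivOfSurjective hψsurj)⟩
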